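/- Let x₁,…,xₙ ∈ [-1,1] \ {0} with |x₁| ≤ ⋯ ≤ |xₙ|, and f(x) = ∏_{i=1}^n (x - x_i). Then for every s < n/3, (1/((2s+1)(3n³)^{s+1})) ∏_{i=s+1}^n |x_i|² ≤ sup_{0 ≤ j ≤ 3s} |f^{(j)}(0)|. -/

import Mathlib

open Polynomial Finset

private lemma polyIteratedDeriv (j : ℕ) (p : Polynomial ℝ) :
    iteratedDeriv j (fun t => p.eval t) = fun t => (derivative^[j] p).eval t := by
  induction j generalizing p with
  | zero => simp
  | succ k ih =>
      rw [iteratedDeriv_succ', Function.iterate_succ_apply]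
      have hd : (deriv fun t => p.eval t) = fun t => p.derivative.eval t := by
        funext t; exact Polynomial.deriv (p := p)
      rw [hd, ih]

private lemma coeffCompXSq (p : Polynomial ℝ) (k : ℕ) :
    (p.comp (X ^ 2 : Polynomial ℝ)).coeff (2 * k) = p.coeff k := by
  rw [Polynomial.comp_eq_sum_left, Polynomial.coeff_sum]
  simp only [Polynomial.coeff_C_mul, ← pow_mul, Polynomial.coeff_X_pow]
  rw [Polynomial.sum_def, Finset.sum_eq_single k]
  · simp
  · intro b _ hb
    have : ¬ (2 * k = 2 * b) := by omega
    simp [this]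
  · intro hk
    simp [Polynomial.notMem_support_iff.mp hk]

/-- Lower bound for the sup of the first `3s` derivatives at `0` of a
polynomial with roots in `[-1,1]`. -/
theorem stmt1 (n : ℕ) (x : Fin n → ℝ)
    (hx0 : ∀ i, x i ≠ 0) (hx1 : ∀ i, |x i| ≤ 1)
    (hmono : ∀ i j : Fin n, i ≤ j → |x i| ≤ |x j|)
    (f : ℝ → ℝ) (hf : f = fun t => ∏ i, (t - x i))
    (s : ℕ) (hs : 3 * s < n) :
    ∃ j ≤ 3 * s,
      (1 / ((2 * (s : ℝ) + 1) * (3 * (n : ℝ) ^ 3) ^ (s + 1))) *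
          ∏ i ∈ Finset.univ.filter (fun i : Fin n => s ≤ (i : ℕ)), |x i| ^ 2 ≤
        |iteratedDeriv j f 0| := by
  have hsn : s < n := by omega
  have h2sn : 2 * s < n := by omega
  have hcardu : (univ : Finset (Fin n)).card = n := by simp
  set A : Polynomial ℝ := ∏ i, (X - C (x i)) with hAdef
  set B : Polynomial ℝ := ∏ i, (X + C (x i)) with hBdef
  set R : Polynomial ℝ := ∏ i, (X - C (x i ^ 2)) with hRdef
  -- f is evaluation of A
  have hfA : f = fun t => A.eval t := by
    funext t
    simp [hf, hAdef, Polynomial.eval_prod]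
  -- iterated derivatives of f at 0
  have hder : ∀ j : ℕ, iteratedDeriv j f 0 = (j.factorial : ℝ) * A.coeff j := by
    intro j
    rw [hfA, polyIteratedDeriv]
    show (derivative^[j] A).eval 0 = _
    rw [← Polynomial.coeff_zero_eq_eval_zero, Polynomial.coeff_iterate_derivative]
    simp [Nat.descFactorial_self, nsmul_eq_mul]
  -- the product identity
  have hAB : A * B = R.comp (X ^ 2 : Polynomial ℝ) := by
    rw [hAdef, hBdef, hRdef, ← Finset.prod_mul_distrib, Polynomial.prod_comp]
    refine Finset.prod_congr rfl fun i _ => ?_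
    rw [Polynomial.sub_comp, Polynomial.X_comp, Polynomial.C_comp]
    rw [show (x i ^ 2) = x i * x i by ring, Polynomial.C_mul]
    ring
  -- coefficient of A*B at 2s equals coeff of R at s
  have hABcoeff : (A * B).coeff (2 * s) = R.coeff s := by
    rw [hAB, coeffCompXSq]
  -- Vieta for R (written with X + C (-(x i ^ 2)))
  have hRcoeff : R.coeff s =
      ∑ t ∈ powersetCard (n - s) (univ : Finset (Fin n)), ∏ i ∈ t, (-(x i ^ 2)) := by
    have : R = ∏ i, (X + C (-(x i ^ 2))) := by
      rw [hRdef]; refine Finset.prod_congr rfl fun i _ => ?_; rw [map_neg]; ring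
    rw [this]
    have h := Finset.prod_X_add_C_coeff (univ : Finset (Fin n))
      (fun i => -(x i ^ 2)) (k := s) (by rw [hcardu]; omega)
    rw [hcardu] at h
    exact h
  -- each term in the Vieta sum for R has sign (-1)^(n-s)
  have hRcoeff' : ((-1 : ℝ)) ^ (n - s) * R.coeff s =
      ∑ t ∈ powersetCard (n - s) (univ : Finset (Fin n)), ∏ i ∈ t, (x i ^ 2) := by
    rw [hRcoeff, Finset.mul_sum]
    refine Finset.sum_congr rfl fun t ht => ?_
    have htc : t.card = n - s := (Finset.mem_powersetCard.mp ht).2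
    have : ∏ i ∈ t, (-(x i ^ 2)) = (-1 : ℝ) ^ t.card * ∏ i ∈ t, (x i ^ 2) := by
      rw [← Finset.prod_const, ← Finset.prod_mul_distrib]
      exact Finset.prod_congr rfl fun i _ => by ring
    rw [this, htc, ← mul_assoc, ← mul_pow]
    simp
  -- T : the target product
  set T : ℝ := ∏ i ∈ Finset.univ.filter (fun i : Fin n => s ≤ (i : ℕ)), |x i| ^ 2 with hTdef
  have hTnonneg : 0 ≤ T := by
    apply Finset.prod_nonneg; intro i _; positivity
  have hTle1 : T ≤ 1 := by
    apply Finset.prod_le_one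
    · intro i _; positivity
    · intro i _
      calc |x i| ^ 2 ≤ 1 ^ 2 := by
            apply pow_le_pow_left₀ (abs_nonneg _) (hx1 i)
        _ = 1 := one_pow 2
  -- the filter set has the right cardinality
  have hfilter_card : (Finset.univ.filter (fun i : Fin n => s ≤ (i : ℕ))).card = n - s := by
    have : Finset.univ.filter (fun i : Fin n => s ≤ (i : ℕ)) = Finset.Ici (⟨s, hsn⟩ : Fin n) := by
      ext i
      simp [Finset.mem_Ici, Fin.le_def]
    rw [this, Fin.card_Ici]
  -- lower bound : T ≤ |R.coeff s|
  have hlow : T ≤ |R.coeff s| := by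
    have hmem : Finset.univ.filter (fun i : Fin n => s ≤ (i : ℕ)) ∈
        powersetCard (n - s) (univ : Finset (Fin n)) :=
      Finset.mem_powersetCard.mpr ⟨Finset.subset_univ _, hfilter_card⟩
    have hsingle : T ≤ ∑ t ∈ powersetCard (n - s) (univ : Finset (Fin n)), ∏ i ∈ t, (x i ^ 2) := by
      have hT' : T = ∏ i ∈ Finset.univ.filter (fun i : Fin n => s ≤ (i : ℕ)), (x i ^ 2) := by
        rw [hTdef]; exact Finset.prod_congr rfl fun i _ => sq_abs (x i)
      rw [hT']
      refine Finset.single_le_sum (f := fun t => ∏ i ∈ t, (x i ^ 2)) ?_ hmem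
      intro t _
      exact Finset.prod_nonneg fun i _ => sq_nonneg (x i)
    calc T ≤ ∑ t ∈ powersetCard (n - s) (univ : Finset (Fin n)), ∏ i ∈ t, (x i ^ 2) := hsingle
      _ = ((-1 : ℝ)) ^ (n - s) * R.coeff s := hRcoeff'.symm
      _ ≤ |((-1 : ℝ)) ^ (n - s) * R.coeff s| := le_abs_self _
      _ = |R.coeff s| := by rw [abs_mul, abs_pow, abs_neg, abs_one, one_pow, one_mul]
  -- |B.coeff b| = |A.coeff b| for b ≤ 2s
  have habs : ∀ b : ℕ, b ≤ 2 * s → |B.coeff b| = |A.coeff b| := by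
    intro b hb
    have hbn : b ≤ n := by omega
    have hA2 : A = ∏ i, (X + C (-(x i))) := by
      rw [hAdef]; refine Finset.prod_congr rfl fun i _ => ?_; rw [map_neg]; ring
    have hAc := Finset.prod_X_add_C_coeff (univ : Finset (Fin n))
      (fun i => -(x i)) (k := b) (by rw [hcardu]; exact hbn)
    have hBc := Finset.prod_X_add_C_coeff (univ : Finset (Fin n))
      (fun i => x i) (k := b) (by rw [hcardu]; exact hbn)
    rw [hcardu] at hAc hBc
    have hBc' : B.coeff b = ∑ t ∈ powersetCard (n - b) (univ : Finset (Fin n)), ∏ i ∈ t, x i := by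
      rw [hBdef]; exact hBc
    have hAc' : A.coeff b = (-1 : ℝ) ^ (n - b) *
        ∑ t ∈ powersetCard (n - b) (univ : Finset (Fin n)), ∏ i ∈ t, x i := by
      rw [hA2, hAc, Finset.mul_sum]
      refine Finset.sum_congr rfl fun t ht => ?_
      have htc : t.card = n - b := (Finset.mem_powersetCard.mp ht).2
      have : ∏ i ∈ t, (-(x i)) = (-1 : ℝ) ^ t.card * ∏ i ∈ t, x i := by
        rw [← Finset.prod_const, ← Finset.prod_mul_distrib]
        exact Finset.prod_congr rfl fun i _ => by ring
      rw [this, htc]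
    rw [hAc', hBc', abs_mul, abs_pow, abs_neg, abs_one, one_pow, one_mul]
  -- pick the max coefficient among 0..2s
  obtain ⟨j₀, hj₀mem, hj₀max⟩ := Finset.exists_max_image (Finset.range (2 * s + 1))
    (fun j => |A.coeff j|) ⟨0, Finset.mem_range.mpr (by omega)⟩
  have hj₀le : j₀ ≤ 2 * s := by
    have := Finset.mem_range.mp hj₀mem; omega
  set M : ℝ := |A.coeff j₀| with hMdef
  have hMnonneg : 0 ≤ M := abs_nonneg _
  -- upper bound : |R.coeff s| ≤ (2s+1) * M^2
  have hup : |R.coeff s| ≤ (2 * (s : ℝ) + 1) * M ^ 2 := by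
    rw [← hABcoeff, Polynomial.coeff_mul]
    calc |∑ p ∈ Finset.HasAntidiagonal.antidiagonal (2 * s), A.coeff p.1 * B.coeff p.2|
        ≤ ∑ p ∈ Finset.HasAntidiagonal.antidiagonal (2 * s), |A.coeff p.1 * B.coeff p.2| :=
          Finset.abs_sum_le_sum_abs _ _
      _ ≤ ∑ _p ∈ Finset.HasAntidiagonal.antidiagonal (2 * s), M ^ 2 := by
          apply Finset.sum_le_sum
          intro p hp
          have hpsum : p.1 + p.2 = 2 * s := Finset.HasAntidiagonal.mem_antidiagonal.mp hp
          have hp1 : p.1 ≤ 2 * s := by omega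
          have hp2 : p.2 ≤ 2 * s := by omega
          rw [abs_mul, habs p.2 hp2]
          have h1 : |A.coeff p.1| ≤ M :=
            hj₀max p.1 (Finset.mem_range.mpr (by omega))
          have h2 : |A.coeff p.2| ≤ M :=
            hj₀max p.2 (Finset.mem_range.mpr (by omega))
          calc |A.coeff p.1| * |A.coeff p.2| ≤ M * M :=
                mul_le_mul h1 h2 (abs_nonneg _) hMnonneg
            _ = M ^ 2 := by ring
      _ = (2 * (s : ℝ) + 1) * M ^ 2 := by
          rw [Finset.sum_const, Finset.Nat.card_antidiagonal]
          push_cast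
          ring
  -- combine : T ≤ (2s+1) M^2
  have hkey : T ≤ (2 * (s : ℝ) + 1) * M ^ 2 := le_trans hlow hup
  -- the constant
  set c : ℝ := (2 * (s : ℝ) + 1) * (3 * (n : ℝ) ^ 3) ^ (s + 1) with hcdef
  have hn1 : (1 : ℝ) ≤ (n : ℝ) := by
    have : 1 ≤ n := by omega
    exact_mod_cast this
  have hn3 : (1 : ℝ) ≤ (n : ℝ) ^ 3 := one_le_pow₀ hn1
  have hpow1 : (1 : ℝ) ≤ (3 * (n : ℝ) ^ 3) ^ (s + 1) := by
    apply one_le_pow₀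
    linarith
  have hs0 : (0 : ℝ) ≤ (s : ℝ) := Nat.cast_nonneg s
  have hs1 : (1 : ℝ) ≤ 2 * (s : ℝ) + 1 := by linarith
  have hcge : 2 * (s : ℝ) + 1 ≤ c :=
    le_mul_of_one_le_right (by linarith) hpow1
  have hc1 : (1 : ℝ) ≤ c := le_trans hs1 hcge
  have hcpos : (0 : ℝ) < c := by linarith
  -- T ≤ c * M
  have hTcM : T ≤ c * M := by
    have e1 : T ≤ c * M ^ 2 :=
      hkey.trans (mul_le_mul_of_nonneg_right hcge (sq_nonneg M))
    have e2 : T ^ 2 ≤ T * (c * M ^ 2) := by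
      rw [sq]
      exact mul_le_mul_of_nonneg_left e1 hTnonneg
    have e3 : T * (c * M ^ 2) ≤ 1 * (c * M ^ 2) :=
      mul_le_mul_of_nonneg_right hTle1 (by positivity)
    have e5 : (0 : ℝ) ≤ c * (c - 1) := mul_nonneg hcpos.le (by linarith)
    have e4 : c * M ^ 2 ≤ c ^ 2 * M ^ 2 := by
      apply mul_le_mul_of_nonneg_right _ (sq_nonneg M)
      nlinarith [e5]
    have hsq : T ^ 2 ≤ (c * M) ^ 2 := by
      rw [mul_pow]
      linarith
    have := Real.sqrt_le_sqrt hsq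
    rwa [Real.sqrt_sq hTnonneg, Real.sqrt_sq (by positivity)] at this
  refine ⟨j₀, by omega, ?_⟩
  rw [hder j₀, abs_mul]
  have hfact : (1 : ℝ) ≤ |(j₀.factorial : ℝ)| := by
    rw [abs_of_nonneg (by positivity)]
    exact_mod_cast Nat.one_le_iff_ne_zero.mpr (Nat.factorial_ne_zero j₀)
  have hstep : 1 / c * T ≤ M := by
    rw [div_mul_eq_mul_div, one_mul, div_le_iff₀ hcpos]
    linarith [hTcM]
  calc 1 / c * T ≤ M := hstep
    _ = 1 * M := (one_mul M).symm
    _ ≤ |(j₀.factorial : ℝ)| * |A.coeff j₀| := by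
        apply mul_le_mul_of_nonneg_right hfact hMnonneg
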